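/- Under the hypotheses of the Read–Bajraktarević construction, assume additionally that each F_p satisfies |F_p(x, y) − F_p(x, y′)| ≤ t_p |y − y′| for all x ∈ [x_0, x_P] and y, y′ ∈ ℝ, where 0 < t_p < 1. Then T is a contraction on the metric space (C, d), where d(h, h′) = max{|h(x) − h′(x)| : x ∈ [x_0, x_P]}, with Lipschitz constant at most t := max{t_1, ..., t_P} < 1; i.e., d(Th, Th′) ≤ t · d(h, h′) for all h, h′ ∈ C. -/

import Mathlib

/-- under the Read–Bajraktarević hypotheses, if moreover each `F p` is a
uniform contraction in the second variable with ratio `t p ∈ (0,1)`, then the operator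
`T` (with `(T h)(l p s) = F p s (h s)`) is a contraction on `(C, d)` with Lipschitz
constant at most `tmax := max {t 1, ..., t P} < 1`, where
`d(h, h') = sup_{u ∈ [x 0, x P]} |h u − h' u|`. -/
theorem stmt_3 (P : ℕ) (hP : 1 ≤ P) (x y : ℕ → ℝ)
    (hx : ∀ i, i < P → x i < x (i + 1))
    (a b : ℕ → ℝ)
    (ha : ∀ p, 1 ≤ p → p ≤ P → 0 < a p)
    (hl0 : ∀ p, 1 ≤ p → p ≤ P → a p * x 0 + b p = x (p - 1))
    (hlP : ∀ p, 1 ≤ p → p ≤ P → a p * x P + b p = x p)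
    (F : ℕ → ℝ → ℝ → ℝ) (t : ℕ → ℝ)
    (hFcont : ∀ p, 1 ≤ p → p ≤ P → ∀ v : ℝ,
      ContinuousOn (fun s : ℝ => F p s v) (Set.Icc (x 0) (x P)))
    (hF0 : ∀ p, 1 ≤ p → p ≤ P → F p (x 0) (y 0) = y (p - 1))
    (hFP : ∀ p, 1 ≤ p → p ≤ P → F p (x P) (y P) = y p)
    (ht : ∀ p, 1 ≤ p → p ≤ P → 0 < t p ∧ t p < 1)
    (hFlip : ∀ p, 1 ≤ p → p ≤ P → ∀ s ∈ Set.Icc (x 0) (x P), ∀ u v : ℝ,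
      |F p s u - F p s v| ≤ t p * |u - v|)
    (h h' : ℝ → ℝ)
    (hh : ContinuousOn h (Set.Icc (x 0) (x P)))
    (hh0 : h (x 0) = y 0) (hhP : h (x P) = y P)
    (hh' : ContinuousOn h' (Set.Icc (x 0) (x P)))
    (hh'0 : h' (x 0) = y 0) (hh'P : h' (x P) = y P)
    (Th Th' : ℝ → ℝ)
    (hTh : ∀ p, 1 ≤ p → p ≤ P → ∀ s ∈ Set.Icc (x 0) (x P),
      Th (a p * s + b p) = F p s (h s))
    (hTh' : ∀ p, 1 ≤ p → p ≤ P → ∀ s ∈ Set.Icc (x 0) (x P),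
      Th' (a p * s + b p) = F p s (h' s)) :
    ((Finset.Icc 1 P).sup' (Finset.nonempty_Icc.mpr hP) t) < 1 ∧
    (⨆ u : Set.Icc (x 0) (x P), |Th u.1 - Th' u.1|) ≤
      ((Finset.Icc 1 P).sup' (Finset.nonempty_Icc.mpr hP) t) *
        ⨆ u : Set.Icc (x 0) (x P), |h u.1 - h' u.1| := by

  classical
  set tmax := ((Finset.Icc 1 P).sup' (Finset.nonempty_Icc.mpr hP) t) with htmax
  have hmono : ∀ i j, i ≤ j → j ≤ P → x i ≤ x j := by
    intro i j hij hjP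
    induction j with
    | zero => simp [Nat.le_zero.mp hij]
    | succ n ih =>
      rcases Nat.lt_or_ge i (n + 1) with hlt | hge
      · exact (ih (Nat.lt_succ_iff.mp hlt) (le_trans (Nat.le_succ n) hjP)).trans
          (hx n (by omega)).le
      · have : i = n + 1 := le_antisymm hij hge
        simp [this]
  have hx0P : x 0 ≤ x P := hmono 0 P (Nat.zero_le _) le_rfl
  have hne : (Set.Icc (x 0) (x P)).Nonempty := ⟨x 0, le_rfl, hx0P⟩
  haveI : Nonempty (Set.Icc (x 0) (x P)) := hne.to_subtype
  have htmax1 : tmax < 1 := by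
    rw [htmax, Finset.sup'_lt_iff]
    intro p hp
    rw [Finset.mem_Icc] at hp
    exact (ht p hp.1 hp.2).2
  have htmax0 : 0 ≤ tmax := by
    have h1 : (1 : ℕ) ∈ Finset.Icc 1 P := Finset.mem_Icc.mpr ⟨le_rfl, hP⟩
    exact le_trans (ht 1 le_rfl hP).1.le (Finset.le_sup' t h1)
  refine ⟨htmax1, ?_⟩
  -- bounded above
  have hbdd : BddAbove (Set.range fun u : Set.Icc (x 0) (x P) => |h u.1 - h' u.1|) := by
    have hc : ContinuousOn (fun u => |h u - h' u|) (Set.Icc (x 0) (x P)) :=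
      (hh.sub hh').abs
    have := (isCompact_Icc.image_of_continuousOn hc).bddAbove
    rwa [show (fun u : Set.Icc (x 0) (x P) => |h u.1 - h' u.1|)
        = (fun u => |h u - h' u|) ∘ Subtype.val from rfl, Set.range_comp,
      Subtype.range_coe]
  set S := (⨆ u : Set.Icc (x 0) (x P), |h u.1 - h' u.1|) with hS
  refine ciSup_le ?_
  rintro ⟨u, hu0, huP⟩
  -- find p with x (p-1) ≤ u ≤ x p
  have hcover : ∃ p, 1 ≤ p ∧ p ≤ P ∧ x (p - 1) ≤ u ∧ u ≤ x p := by
    set i := Nat.findGreatest (fun k => x k ≤ u) P with hi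
    have hiP : i ≤ P := Nat.findGreatest_le P
    have hix : x i ≤ u := Nat.findGreatest_spec (P := fun k => x k ≤ u) (Nat.zero_le _) hu0
    rcases Nat.lt_or_ge i P with hlt | hge
    · refine ⟨i + 1, by omega, by omega, by simpa using hix, ?_⟩
      have := Nat.findGreatest_is_greatest (P := fun k => x k ≤ u) (n := P)
        (Nat.lt_succ_self i) (by omega)
      simp only [Nat.succ_eq_add_one] at this
      exact (not_le.mp this).le
    · have hiPeq : i = P := le_antisymm hiP hge
      refine ⟨P, hP, le_rfl, ?_, huP⟩
      calc x (P - 1) ≤ x P := hmono (P - 1) P (by omega) le_rfl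
        _ = x i := by rw [hiPeq]
        _ ≤ u := hix
  obtain ⟨p, hp1, hpP, hlo, hhi⟩ := hcover
  have hap := ha p hp1 hpP
  set s := (u - b p) / a p with hsdef
  have hus : a p * s + b p = u := by rw [hsdef, mul_comm, div_mul_cancel₀ _ hap.ne']; ring
  have hs0 : x 0 ≤ s := by
    rw [hsdef, le_div_iff₀ hap]
    have := hl0 p hp1 hpP
    nlinarith
  have hsP : s ≤ x P := by
    rw [hsdef, div_le_iff₀ hap]
    have := hlP p hp1 hpP
    nlinarith
  have hsmem : s ∈ Set.Icc (x 0) (x P) := ⟨hs0, hsP⟩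
  have e1 : Th u = F p s (h s) := by rw [← hus]; exact hTh p hp1 hpP s hsmem
  have e2 : Th' u = F p s (h' s) := by rw [← hus]; exact hTh' p hp1 hpP s hsmem
  rw [e1, e2]
  have hlip := hFlip p hp1 hpP s hsmem (h s) (h' s)
  have htp : t p ≤ tmax := Finset.le_sup' t (Finset.mem_Icc.mpr ⟨hp1, hpP⟩)
  have hhs : |h s - h' s| ≤ S := le_ciSup hbdd (⟨s, hsmem⟩ : Set.Icc (x 0) (x P))
  have hhs0 : 0 ≤ |h s - h' s| := abs_nonneg _
  calc |F p s (h s) - F p s (h' s)| ≤ t p * |h s - h' s| := hlip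
    _ ≤ tmax * S := by nlinarith
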